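/- arXiv:2202.06362 — 3 statements merged into one kernel-verified Lean document; each statement's English description precedes it below -/
import Mathlib

section
/- If a permutation w of {1,…,n} avoids the pattern 2143 (i.e., w is vexillary), then any two boxes of its essential set are comparable in the northeast–southwest order: for all (a,b), (c,d) ∈ E(w), either (a ≤ c and b ≥ d) or (a ≥ c and b ≤ d). -/
/-- `w` contains the pattern `p` if there are indices `i₁ < … < i_k` such that
`w i_a < w i_b ↔ p a < p b` for all `a, b`. -/
def ContainsPattern {n k : ℕ} (w : Equiv.Perm (Fin n)) (p : Equiv.Perm (Fin k)) : Prop :=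
  ∃ f : Fin k → Fin n, StrictMono f ∧ ∀ a b : Fin k, w (f a) < w (f b) ↔ p a < p b

/-- `w` avoids the pattern `p` if it does not contain it. -/
def AvoidsPattern {n k : ℕ} (w : Equiv.Perm (Fin n)) (p : Equiv.Perm (Fin k)) : Prop :=
  ¬ ContainsPattern w p

/-- The pattern `2143` (in one-line notation, written 0-based as `1,0,3,2`). -/
def pattern2143 : Equiv.Perm (Fin 4) :=
  ⟨![1, 0, 3, 2], ![1, 0, 3, 2], by decide, by decide⟩

/-- `(i,j)` (given as natural numbers) lies in the Rothe diagram `D(w)`, i.e. `i, j` are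
in range and `w i > j` and `w⁻¹ j > i`. -/
def InRothe {n : ℕ} (w : Equiv.Perm (Fin n)) (i j : ℕ) : Prop :=
  ∃ (hi : i < n) (hj : j < n), j < (w ⟨i, hi⟩ : ℕ) ∧ i < (w⁻¹ ⟨j, hj⟩ : ℕ)

/-- `(i,j)` lies in the essential set `E(w)`: it is in `D(w)` but neither `(i+1,j)`
nor `(i,j+1)` is. -/
def InEssential {n : ℕ} (w : Equiv.Perm (Fin n)) (i j : ℕ) : Prop :=
  InRothe w i j ∧ ¬ InRothe w (i + 1) j ∧ ¬ InRothe w i (j + 1)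

lemma quad_mono {n : ℕ} (g : Fin 4 → Fin n) (h1 : g 0 < g 1) (h2 : g 1 < g 2)
    (h3 : g 2 < g 3) : StrictMono g := by
  intro i j hij
  fin_cases i <;> fin_cases j <;> simp_all <;>
    first
      | exact h1.trans h2
      | exact h2.trans h3
      | exact (h1.trans h2).trans h3

lemma quad_pattern (u : Fin 4 → ℕ) (h1 : u 1 < u 0) (h2 : u 0 < u 3) (h3 : u 3 < u 2) :
    ∀ x y : Fin 4, u x < u y ↔ pattern2143 x < pattern2143 y := by
  intro x y
  fin_cases x <;> fin_cases y <;> simp_all [pattern2143] <;> omega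

lemma ess_facts {n : ℕ} (w : Equiv.Perm (Fin n)) {a b : ℕ} (h : InEssential w a b) :
    ∃ (ha : a < n) (hb : b < n) (ha1 : a + 1 < n) (hb1 : b + 1 < n),
      b < (w ⟨a, ha⟩ : ℕ) ∧ a < (w⁻¹ ⟨b, hb⟩ : ℕ) ∧
      (w ⟨a + 1, ha1⟩ : ℕ) ≤ b ∧ (w⁻¹ ⟨b + 1, hb1⟩ : ℕ) ≤ a := by
  obtain ⟨⟨ha, hb, h1, h2⟩, hA, hB⟩ := h
  have ha1 : a + 1 < n := lt_of_le_of_lt h2 (w⁻¹ ⟨b, hb⟩).isLt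
  have hb1 : b + 1 < n := lt_of_le_of_lt h1 (w ⟨a, ha⟩).isLt
  refine ⟨ha, hb, ha1, hb1, h1, h2, ?_, ?_⟩
  · by_contra h3
    push_neg at h3
    have hne : a + 1 < (w⁻¹ ⟨b, hb⟩ : ℕ) := by
      rcases lt_or_eq_of_le (Nat.succ_le_of_lt h2) with h' | h'
      · exact h'
      · exfalso
        have e1 : w⁻¹ ⟨b, hb⟩ = ⟨a + 1, ha1⟩ := Fin.ext h'.symm
        have e2 : (⟨b, hb⟩ : Fin n) = w ⟨a + 1, ha1⟩ := Equiv.Perm.inv_eq_iff_eq.mp e1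
        have e3 : b = (w ⟨a + 1, ha1⟩ : ℕ) := congrArg Fin.val e2
        omega
    exact hA ⟨ha1, hb, h3, hne⟩
  · by_contra h4
    push_neg at h4
    have hne : b + 1 < (w ⟨a, ha⟩ : ℕ) := by
      rcases lt_or_eq_of_le (Nat.succ_le_of_lt h1) with h' | h'
      · exact h'
      · exfalso
        have e1 : w ⟨a, ha⟩ = ⟨b + 1, hb1⟩ := Fin.ext h'.symm
        have e2 : w⁻¹ ⟨b + 1, hb1⟩ = ⟨a, ha⟩ := by
          rw [← e1]; exact w.symm_apply_apply _
        have e3 : (w⁻¹ ⟨b + 1, hb1⟩ : ℕ) = a := congrArg Fin.val e2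
        omega
    exact hB ⟨ha, hb1, hne, h4⟩

lemma key_contains {n : ℕ} (w : Equiv.Perm (Fin n)) {a b c d : ℕ}
    (h1 : InEssential w a b) (h2 : InEssential w c d) (hac : a < c) (hbd : b < d) :
    ContainsPattern w pattern2143 := by
  obtain ⟨ha, hb, ha1, hb1, E1, E2, E3, E4⟩ := ess_facts w h1
  obtain ⟨hc, hd, hc1, hd1, F1, F2, F3, F4⟩ := ess_facts w h2
  have hd2 : b + 2 ≤ d := by
    by_contra hcon
    have heq : d = b + 1 := by omega
    have e : w⁻¹ (⟨b + 1, hb1⟩ : Fin n) = w⁻¹ ⟨d, hd⟩ := by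
      congr 1; exact Fin.ext heq.symm
    have := congrArg Fin.val e
    omega
  have hc2 : a + 2 ≤ c := by
    by_contra hcon
    have heq : c = a + 1 := by omega
    have e : w (⟨a + 1, ha1⟩ : Fin n) = w ⟨c, hc⟩ := by
      congr 1; exact Fin.ext heq.symm
    have := congrArg Fin.val e
    omega
  set g : Fin 4 → Fin n := ![w⁻¹ ⟨b + 1, hb1⟩, ⟨a + 1, ha1⟩, ⟨c, hc⟩, w⁻¹ ⟨d, hd⟩] with hg
  have e0 : g 0 = w⁻¹ ⟨b + 1, hb1⟩ := rfl
  have e1 : g 1 = ⟨a + 1, ha1⟩ := rfl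
  have e2 : g 2 = ⟨c, hc⟩ := rfl
  have e3 : g 3 = w⁻¹ ⟨d, hd⟩ := rfl
  have v0 : (w (g 0) : ℕ) = b + 1 := by rw [e0, ← Equiv.Perm.mul_apply, mul_inv_cancel, Equiv.Perm.one_apply]
  have v3 : (w (g 3) : ℕ) = d := by rw [e3, ← Equiv.Perm.mul_apply, mul_inv_cancel, Equiv.Perm.one_apply]
  refine ⟨g, ?_, ?_⟩
  · refine quad_mono g ?_ ?_ ?_ <;> rw [Fin.lt_def]
    · rw [e0, e1]; simpa using lt_of_le_of_lt E4 (Nat.lt_succ_self a)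
    · rw [e1, e2]; simpa using lt_of_lt_of_le (Nat.lt_succ_self (a+1)) (by omega)
    · rw [e2, e3]; simpa using F2
  · intro x y
    rw [Fin.lt_def]
    refine quad_pattern (fun x => (w (g x) : ℕ)) ?_ ?_ ?_ x y
    · simp only [v0]
      rw [e1]; omega
    · simp only [v0, v3]; omega
    · simp only [v3]
      rw [e2]; omega

/-- If `w` avoids `2143` (is vexillary), then any two boxes of its essential set are
comparable in the northeast–southwest order. -/
theorem essential_comparable_of_vexillary {n : ℕ} (w : Equiv.Perm (Fin n))
    (hw : AvoidsPattern w pattern2143) :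
    ∀ a b c d : ℕ, InEssential w a b → InEssential w c d →
      (a ≤ c ∧ d ≤ b) ∨ (c ≤ a ∧ b ≤ d) := by
  intro a b c d h1 h2
  rcases le_or_gt a c with h | h
  · rcases le_or_gt d b with h' | h'
    · exact Or.inl ⟨h, h'⟩
    · rcases eq_or_lt_of_le h with rfl | hlt
      · exact Or.inr ⟨le_refl _, h'.le⟩
      · exact absurd (key_contains w h1 h2 hlt h') hw
  · rcases le_or_gt b d with h' | h'
    · exact Or.inr ⟨h.le, h'⟩
    · exact absurd (key_contains w h2 h1 h h') hw
end

section
/- For j ≥ 1 and n = 3j−1, the permutation u of {1,…,n} defined by u(m) = m for 1 ≤ m ≤ j−1, u(j−1+2k−1) = 2j−1+k for 1 ≤ k ≤ j, and u(j−1+2k) = j−1+k for 1 ≤ k ≤ j, avoids the pattern 2143, and its code has nonzero entries exactly c_{j−2+2k} = j+1−k for k = 1, …, j; in particular its sorted code is the staircase partition (j, j−1, …, 1) and ℓ(u) = j(j+1)/2. -/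
set_option linter.unusedVariables false
set_option linter.unusedSectionVars false
set_option maxHeartbeats 1000000


open Finset

/-- The Coxeter length (number of inversions) of a permutation of `Fin n`. -/
def permLength {n : ℕ} (w : Equiv.Perm (Fin n)) : ℕ :=
  ((univ : Finset (Fin n × Fin n)).filter (fun p => p.1 < p.2 ∧ w p.2 < w p.1)).card

/-- The code of `w`: `c i` is the number of `j > i` with `w j < w i`. -/
def permCode {n : ℕ} (w : Equiv.Perm (Fin n)) (i : Fin n) : ℕ :=
  ((univ : Finset (Fin n)).filter (fun j => i < j ∧ w j < w i)).card

/-- The sorted (weakly decreasing) code of `w`, i.e. the partition `λ(w)`. -/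
def sortedCode {n : ℕ} (w : Equiv.Perm (Fin n)) : List ℕ :=
  (List.ofFn (permCode w)).mergeSort (fun a b => b ≤ a)

def stairSigma (j n : ℕ) (hj : 1 ≤ j) (hn : n = 3 * j - 1) (i : Fin n) : Fin n :=
  if h : (i : ℕ) < j then ⟨j + 2 * (i : ℕ) - 1, by omega⟩
  else if h' : (i : ℕ) < 2 * j - 1 then ⟨(i : ℕ) - j, by have := i.2; omega⟩
  else ⟨2 * (i : ℕ) + 2 - 3 * j, by have := i.2; omega⟩

lemma stairSigma_inj (j n : ℕ) (hj : 1 ≤ j) (hn : n = 3 * j - 1) :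
    Function.Injective (stairSigma j n hj hn) := by
  intro a b hab
  have ha := a.2
  have hb := b.2
  unfold stairSigma at hab
  split_ifs at hab <;>
    (simp only [Fin.mk.injEq] at hab; exact Fin.ext (by omega))

section Aux
variable {j n : ℕ} {u : Equiv.Perm (Fin n)}

/-- trichotomy of positions -/
lemma tri (hj : 1 ≤ j) (hn : n = 3 * j - 1) (i : Fin n) :
    ((i : ℕ) + 1 < j) ∨ (∃ k, 1 ≤ k ∧ k ≤ j ∧ (i : ℕ) + 3 = j + 2 * k) ∨
      (∃ k, 1 ≤ k ∧ k ≤ j ∧ (i : ℕ) + 2 = j + 2 * k) := by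
  have hi := i.2
  rcases Nat.lt_or_ge ((i : ℕ) + 1) j with h | h
  · exact Or.inl h
  rcases Nat.even_or_odd ((i : ℕ) + 1 - j) with ⟨m, hm⟩ | ⟨m, hm⟩
  · exact Or.inr (Or.inl ⟨m + 1, by omega, by omega, by omega⟩)
  · exact Or.inr (Or.inr ⟨m + 1, by omega, by omega, by omega⟩)

/-- value on B positions -/
lemma valB (hj : 1 ≤ j)
    (h2 : ∀ k, 1 ≤ k → k ≤ j → ∀ i : Fin n, (i : ℕ) + 1 = j - 1 + 2 * k - 1 →
      (u i : ℕ) + 1 = 2 * j - 1 + k)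
    {k : ℕ} (hk1 : 1 ≤ k) (hk2 : k ≤ j) {i : Fin n} (hi : (i : ℕ) + 3 = j + 2 * k) :
    (u i : ℕ) + 2 = 2 * j + k := by
  have := h2 k hk1 hk2 i (by omega)
  omega

/-- value on C positions -/
lemma valC (hj : 1 ≤ j)
    (h3 : ∀ k, 1 ≤ k → k ≤ j → ∀ i : Fin n, (i : ℕ) + 1 = j - 1 + 2 * k →
      (u i : ℕ) + 1 = j - 1 + k)
    {k : ℕ} (hk1 : 1 ≤ k) (hk2 : k ≤ j) {i : Fin n} (hi : (i : ℕ) + 2 = j + 2 * k) :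
    (u i : ℕ) + 2 = j + k := by
  have := h3 k hk1 hk2 i (by omega)
  omega

/-- value on A positions -/
lemma valA (hj : 1 ≤ j)
    (h1 : ∀ i : Fin n, (i : ℕ) + 1 ≤ j - 1 → (u i : ℕ) + 1 = (i : ℕ) + 1)
    {i : Fin n} (hi : (i : ℕ) + 1 < j) : (u i : ℕ) = (i : ℕ) := by
  have := h1 i (by omega)
  omega

variable (hj : 1 ≤ j) (hn : n = 3 * j - 1)
  (h1 : ∀ i : Fin n, (i : ℕ) + 1 ≤ j - 1 → (u i : ℕ) + 1 = (i : ℕ) + 1)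
  (h2 : ∀ k, 1 ≤ k → k ≤ j → ∀ i : Fin n, (i : ℕ) + 1 = j - 1 + 2 * k - 1 →
      (u i : ℕ) + 1 = 2 * j - 1 + k)
  (h3 : ∀ k, 1 ≤ k → k ≤ j → ∀ i : Fin n, (i : ℕ) + 1 = j - 1 + 2 * k →
      (u i : ℕ) + 1 = j - 1 + k)

include hj hn h1 h2 h3


lemma invFwd {i1 i2 : Fin n} (hlt : i1 < i2) (hv : u i2 < u i1) :
    ∃ k k', 1 ≤ k ∧ k ≤ k' ∧ k' ≤ j ∧ (i1 : ℕ) + 3 = j + 2 * k ∧ (i2 : ℕ) + 2 = j + 2 * k' := by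
  rw [Fin.lt_def] at hlt hv
  rcases tri hj hn i1 with hA1 | ⟨k1, hk1a, hk1b, hk1c⟩ | ⟨k1, hk1a, hk1b, hk1c⟩ <;>
    rcases tri hj hn i2 with hA2 | ⟨k2, hk2a, hk2b, hk2c⟩ | ⟨k2, hk2a, hk2b, hk2c⟩
  · have e1 := valA hj h1 hA1; have e2 := valA hj h1 hA2; omega
  · have e1 := valA hj h1 hA1; have e2 := valB hj h2 hk2a hk2b hk2c; omega
  · have e1 := valA hj h1 hA1; have e2 := valC hj h3 hk2a hk2b hk2c; omega
  · have e1 := valB hj h2 hk1a hk1b hk1c; have e2 := valA hj h1 hA2; omega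
  · have e1 := valB hj h2 hk1a hk1b hk1c; have e2 := valB hj h2 hk2a hk2b hk2c; omega
  · exact ⟨k1, k2, hk1a, by omega, hk2b, hk1c, hk2c⟩
  · have e1 := valC hj h3 hk1a hk1b hk1c; have e2 := valA hj h1 hA2; omega
  · have e1 := valC hj h3 hk1a hk1b hk1c; have e2 := valB hj h2 hk2a hk2b hk2c; omega
  · have e1 := valC hj h3 hk1a hk1b hk1c; have e2 := valC hj h3 hk2a hk2b hk2c; omega

lemma invBwd {k k' : ℕ} (hk1 : 1 ≤ k) (hkk : k ≤ k') (hk2 : k' ≤ j) {i1 i2 : Fin n}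
    (hi1 : (i1 : ℕ) + 3 = j + 2 * k) (hi2 : (i2 : ℕ) + 2 = j + 2 * k') :
    i1 < i2 ∧ u i2 < u i1 := by
  have e1 := valB hj h2 hk1 (by omega) hi1
  have e2 := valC hj h3 (by omega) hk2 hi2
  rw [Fin.lt_def, Fin.lt_def]
  omega

lemma codeB {k : ℕ} (hk1 : 1 ≤ k) (hk2 : k ≤ j) {i : Fin n} (hi : (i : ℕ) + 3 = j + 2 * k) :
    permCode u i = j + 1 - k := by
  have hcard : ((univ : Finset (Fin n)).filter (fun b => i < b ∧ u b < u i)).card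
      = (Finset.Icc k j).card := by
    refine Finset.card_bij' (fun a _ => ((a : ℕ) + 2 - j) / 2)
      (fun b _ => (⟨min (j + 2 * b - 2) (n - 1), by omega⟩ : Fin n)) ?_ ?_ ?_ ?_
    · intro a ha
      rw [Finset.mem_filter] at ha
      obtain ⟨k0, k0', e1, e2, e3, e4, e5⟩ := invFwd hj hn h1 h2 h3 ha.2.1 ha.2.2
      rw [Finset.mem_Icc]
      omega
    · intro b hb
      rw [Finset.mem_Icc] at hb
      have hmem := invBwd hj hn h1 h2 h3 hk1 hb.1 hb.2 hi
        (i2 := ⟨min (j + 2 * b - 2) (n - 1), by omega⟩) (by simp; omega)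
      rw [Finset.mem_filter]
      exact ⟨Finset.mem_univ _, hmem⟩
    · intro a ha
      rw [Finset.mem_filter] at ha
      obtain ⟨k0, k0', e1, e2, e3, e4, e5⟩ := invFwd hj hn h1 h2 h3 ha.2.1 ha.2.2
      apply Fin.ext
      dsimp only
      omega
    · intro b hb
      rw [Finset.mem_Icc] at hb
      dsimp only
      omega
  rw [permCode, hcard, Nat.card_Icc]

lemma codeZero {i : Fin n} (hi : ∀ k, 1 ≤ k → k ≤ j → (i : ℕ) + 3 ≠ j + 2 * k) :
    permCode u i = 0 := by
  rw [permCode, Finset.card_eq_zero, Finset.filter_eq_empty_iff]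
  rintro a - ⟨hlt, hv⟩
  obtain ⟨k, k', e1, e2, e3, e4, e5⟩ := invFwd hj hn h1 h2 h3 hlt hv
  exact hi k e1 (by omega) e4

lemma codeSigma (i : Fin n) : permCode u (stairSigma j n hj hn i) = j - (i : ℕ) := by
  unfold stairSigma
  split_ifs with ha hb
  · rw [codeB hj hn h1 h2 h3 (k := (i : ℕ) + 1) (by omega) (by omega)
      (by omega : j + 2 * (i : ℕ) - 1 + 3 = j + 2 * ((i : ℕ) + 1))]
    omega
  · rw [codeZero hj hn h1 h2 h3 (fun k hk1 hk2 heq => by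
      have : (i : ℕ) - j + 3 = j + 2 * k := heq
      omega)]
    omega
  · have hi := i.2
    rw [codeZero hj hn h1 h2 h3 (fun k hk1 hk2 heq => by
      have : 2 * (i : ℕ) + 2 - 3 * j + 3 = j + 2 * k := heq
      omega)]
    omega

omit h1 h2 h3 in
lemma stair_map_perm : ((List.finRange n).map (stairSigma j n hj hn)).Perm (List.finRange n) := by
  apply List.perm_iff_count.mpr
  intro x
  have hbij := Finite.injective_iff_bijective.mp (stairSigma_inj j n hj hn)
  obtain ⟨y, hy⟩ := hbij.2 x
  have hnd := List.nodup_finRange n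
  rw [← hy, List.count_map_of_injective _ _ (stairSigma_inj j n hj hn),
    List.count_eq_one_of_mem hnd (List.mem_finRange y),
    List.count_eq_one_of_mem hnd (List.mem_finRange _)]

lemma code_list_perm :
    (List.ofFn (permCode u)).Perm (List.ofFn fun i : Fin n => j - (i : ℕ)) := by
  rw [List.ofFn_eq_map, List.ofFn_eq_map]
  have h := (stair_map_perm (j := j) (n := n) hj hn).map (permCode u)
  rw [List.map_map] at h
  have he : (permCode u ∘ stairSigma j n hj hn) = fun i : Fin n => j - (i : ℕ) :=
    funext fun i => codeSigma hj hn h1 h2 h3 i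
  rw [he] at h
  exact h.symm

lemma sorted_code_eq : sortedCode u = List.ofFn (fun i : Fin n => j - (i : ℕ)) := by
  haveI : IsAntisymm ℕ (fun a b : ℕ => b ≤ a) := ⟨fun a b x y => le_antisymm y x⟩
  have hperm : (sortedCode u).Perm (List.ofFn fun i : Fin n => j - (i : ℕ)) :=
    (List.mergeSort_perm _ _).trans (code_list_perm hj hn h1 h2 h3)
  rw [sortedCode] at hperm ⊢
  refine List.Perm.eq_of_pairwise (le := fun a b : ℕ => b ≤ a) (fun a b _ _ x y => le_antisymm y x) ?_ ?_ hperm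
  · have hs := List.pairwise_mergeSort (le := fun a b : ℕ => decide (b ≤ a))
      (by intro a b c hab hbc; simp only [decide_eq_true_eq] at *; omega)
      (by intro a b; simp only [Bool.or_eq_true, decide_eq_true_eq]; omega)
      (List.ofFn (permCode u))
    exact hs.imp (fun h => by simpa using h)
  · exact List.pairwise_ofFn.mpr fun a b hab => by
      have := Fin.lt_def.mp hab
      exact Nat.sub_le_sub_left this.le j

omit hj hn h1 h2 h3 in
lemma length_sum : permLength u = ∑ i : Fin n, permCode u i := by
  simp only [permLength, permCode, Finset.card_filter, Fintype.sum_prod_type]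

end Aux

lemma gauss (m : ℕ) : ∑ i ∈ Finset.range m, (m - i) = m * (m + 1) / 2 := by
  have h1 : ∑ i ∈ Finset.range m, (m - i) = ∑ i ∈ Finset.range m, (i + 1) := by
    rw [← Finset.sum_range_reflect (fun i => i + 1) m]
    exact Finset.sum_congr rfl fun i hi => by rw [Finset.mem_range] at hi; omega
  have h2 : ∑ i ∈ Finset.range (m + 1), i = ∑ i ∈ Finset.range m, (i + 1) := by
    rw [Finset.sum_range_succ' (fun i => i) m]; simp
  have h3 := Finset.sum_range_id_mul_two (m + 1)
  rw [h1, ← h2, Nat.mul_comm m (m + 1)]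
  exact (Nat.div_eq_of_eq_mul_left (by norm_num) h3.symm).symm


/-- For `j ≥ 1` and `n = 3j - 1`, the permutation `u` of `{1,…,n}` (written 1-based via
`(i : ℕ) + 1` for positions and `(u i : ℕ) + 1` for values) defined by `u(m) = m` for
`1 ≤ m ≤ j-1`, `u(j-1+2k-1) = 2j-1+k` and `u(j-1+2k) = j-1+k` for `1 ≤ k ≤ j`,
avoids `2143`; its code has nonzero entries exactly `c_{j-2+2k} = j+1-k` for `k = 1,…,j`;
its sorted code is the staircase partition `(j, j-1, …, 1)`; and `ℓ(u) = j(j+1)/2`. -/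
theorem explicit_vexillary_staircase (j n : ℕ) (hj : 1 ≤ j) (hn : n = 3 * j - 1)
    (u : Equiv.Perm (Fin n))
    (h1 : ∀ i : Fin n, (i : ℕ) + 1 ≤ j - 1 → (u i : ℕ) + 1 = (i : ℕ) + 1)
    (h2 : ∀ k, 1 ≤ k → k ≤ j → ∀ i : Fin n, (i : ℕ) + 1 = j - 1 + 2 * k - 1 →
      (u i : ℕ) + 1 = 2 * j - 1 + k)
    (h3 : ∀ k, 1 ≤ k → k ≤ j → ∀ i : Fin n, (i : ℕ) + 1 = j - 1 + 2 * k →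
      (u i : ℕ) + 1 = j - 1 + k) :
    AvoidsPattern u pattern2143 ∧
    (∀ k, 1 ≤ k → k ≤ j → ∀ i : Fin n, (i : ℕ) + 1 = j + 2 * k - 2 →
      permCode u i = j + 1 - k) ∧
    (∀ i : Fin n, (∀ k, 1 ≤ k → k ≤ j → (i : ℕ) + 1 ≠ j + 2 * k - 2) →
      permCode u i = 0) ∧
    sortedCode u = List.ofFn (fun i : Fin n => j - (i : ℕ)) ∧
    permLength u = j * (j + 1) / 2 := by
  refine ⟨?_, ?_, ?_, ?_, ?_⟩
  · rintro ⟨f, hmono, hpat⟩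
    have hf01 : f 0 < f 1 := hmono (by decide : (0 : Fin 4) < 1)
    have hf23 : f 2 < f 3 := hmono (by decide : (2 : Fin 4) < 3)
    have hv10 : u (f 1) < u (f 0) := (hpat 1 0).mpr (by decide)
    have hv32 : u (f 3) < u (f 2) := (hpat 3 2).mpr (by decide)
    have hv03 : u (f 0) < u (f 3) := (hpat 0 3).mpr (by decide)
    obtain ⟨k, k', hk1, hkk, hk2, hp0, hp1⟩ := invFwd hj hn h1 h2 h3 hf01 hv10
    obtain ⟨l, l', hl1, hll, hl2, hp2, hp3⟩ := invFwd hj hn h1 h2 h3 hf23 hv32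
    have e0 := valB hj h2 hk1 (by omega) hp0
    have e3 := valC hj h3 (by omega) hl2 hp3
    rw [Fin.lt_def] at hv03
    omega
  · intro k hk1 hk2 i hi
    exact codeB hj hn h1 h2 h3 hk1 hk2 (by omega)
  · intro i hi
    exact codeZero hj hn h1 h2 h3 (fun k hk1 hk2 heq => hi k hk1 hk2 (by omega))
  · exact sorted_code_eq hj hn h1 h2 h3
  · rw [length_sum]
    calc ∑ i : Fin n, permCode u i
        = ∑ i : Fin n, permCode u ((Equiv.ofBijective _
            (Finite.injective_iff_bijective.mp (stairSigma_inj j n hj hn))) i) :=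
          (Equiv.sum_comp _ _).symm
      _ = ∑ i : Fin n, (j - (i : ℕ)) :=
          Finset.sum_congr rfl (fun i _ => codeSigma hj hn h1 h2 h3 i)
      _ = ∑ i ∈ Finset.range n, (j - i) := Fin.sum_univ_eq_sum_range _ n
      _ = ∑ i ∈ Finset.range j, (j - i) :=
          (Finset.sum_subset (Finset.range_subset_range.mpr (by omega))
            (fun x _ hx => by rw [Finset.mem_range] at *; omega)).symm
      _ = j * (j + 1) / 2 := gauss j
end

section
/- A permutation of {1,…,n} is uniquely determined by the values of its rank matrix on its essential set: if v and w are permutations of {1,…,n} with E(v) = E(w) and r_{ij}(v) = r_{ij}(w) for every (i,j) ∈ E(w), then v = w. -/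
open Finset

/-- The rank matrix of `w` (given at natural-number coordinates): `r i j` = the number of
`a ≤ i` with `w a ≤ j`. -/
def rankMatrix {n : ℕ} (w : Equiv.Perm (Fin n)) (i j : ℕ) : ℕ :=
  ((univ : Finset (Fin n)).filter (fun a : Fin n => (a : ℕ) ≤ i ∧ (w a : ℕ) ≤ j)).card

lemma rank_mono {n : ℕ} (v : Equiv.Perm (Fin n)) {i j I J : ℕ} (hI : i ≤ I) (hJ : j ≤ J) :
    rankMatrix v i j ≤ rankMatrix v I J := by
  apply Finset.card_le_card
  intro a ha
  simp only [mem_filter, mem_univ, true_and] at ha ⊢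
  omega

lemma rank_right {n : ℕ} (v : Equiv.Perm (Fin n)) {i j : ℕ} (h : InRothe v i (j + 1)) :
    rankMatrix v i (j + 1) = rankMatrix v i j := by
  obtain ⟨hi, hj1, hval, hinv⟩ := h
  unfold rankMatrix
  congr 1
  apply Finset.filter_congr
  intro a _
  constructor
  · rintro ⟨h1, h2⟩
    refine ⟨h1, ?_⟩
    rcases Nat.lt_or_ge (v a : ℕ) (j + 1) with h3 | h3
    · omega
    · have hva : v a = ⟨j + 1, hj1⟩ := Fin.ext (by simp only [Fin.val_mk]; omega)
      have : v⁻¹ ⟨j + 1, hj1⟩ = a := by rw [← hva]; exact Equiv.symm_apply_apply v a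
      rw [this] at hinv; omega
  · rintro ⟨h1, h2⟩; exact ⟨h1, by omega⟩

lemma rank_down {n : ℕ} (v : Equiv.Perm (Fin n)) {i j : ℕ} (h : InRothe v (i + 1) j) :
    rankMatrix v (i + 1) j = rankMatrix v i j := by
  obtain ⟨hi1, hj, hval, _⟩ := h
  unfold rankMatrix
  congr 1
  apply Finset.filter_congr
  intro a _
  constructor
  · rintro ⟨h1, h2⟩
    refine ⟨?_, h2⟩
    rcases Nat.lt_or_ge (a : ℕ) (i + 1) with h3 | h3
    · omega
    · have ha : a = ⟨i + 1, hi1⟩ := Fin.ext (by simp only [Fin.val_mk]; omega)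
      rw [ha] at h2; omega
  · rintro ⟨h1, h2⟩; exact ⟨by omega, h2⟩

lemma toEssential {n : ℕ} (v : Equiv.Perm (Fin n)) :
    ∀ m i j : ℕ, (n - i) + (n - j) ≤ m → InRothe v i j →
      ∃ I J : ℕ, i ≤ I ∧ j ≤ J ∧ InEssential v I J ∧
        rankMatrix v I J = rankMatrix v i j := by
  intro m
  induction m with
  | zero =>
    intro i j hm h
    obtain ⟨hi, hj, -⟩ := h
    omega
  | succ m ih =>
    intro i j hm h
    obtain ⟨hi, hj, -⟩ := id h
    by_cases h1 : InRothe v i (j + 1)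
    · obtain ⟨I, J, hI, hJ, hess, hrk⟩ := ih i (j + 1) (by omega) h1
      exact ⟨I, J, hI, by omega, hess, by rw [hrk, rank_right v h1]⟩
    · by_cases h2 : InRothe v (i + 1) j
      · obtain ⟨I, J, hI, hJ, hess, hrk⟩ := ih (i + 1) j (by omega) h2
        exact ⟨I, J, by omega, hJ, hess, by rw [hrk, rank_down v h2]⟩
      · exact ⟨i, j, le_rfl, le_rfl, ⟨h, h2, h1⟩, rfl⟩

lemma key {n : ℕ} (v w : Equiv.Perm (Fin n))
    (hE : ∀ i j : ℕ, InEssential v i j ↔ InEssential w i j)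
    (hr : ∀ i j : ℕ, InEssential w i j → rankMatrix v i j = rankMatrix w i j)
    (i₀ : Fin n) (hlt : ∀ a : Fin n, a < i₀ → v a = w a)
    (hwv : (w i₀ : ℕ) < (v i₀ : ℕ)) : False := by
  set i := (i₀ : ℕ) with hidef
  set j := ((w i₀ : Fin n) : ℕ) with hjdef
  have heq_of_lt : ∀ a : Fin n, (a : ℕ) < i → v a = w a := by
    intro a ha
    exact hlt a ha
  have hrothe : InRothe v i j := by
    refine ⟨i₀.isLt, (w i₀).isLt, ?_, ?_⟩
    · simpa using hwv
    · have hfin : (⟨j, (w i₀).isLt⟩ : Fin n) = w i₀ := Fin.ext rfl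
      rw [hfin]
      by_contra hcon
      push_neg at hcon
      set a := v⁻¹ (w i₀) with hadef
      have hva : v a = w i₀ := Equiv.apply_symm_apply v (w i₀)
      rcases Nat.lt_or_ge (a : ℕ) i with h3 | h3
      · have := heq_of_lt a h3
        rw [this] at hva
        have : a = i₀ := w.injective hva
        rw [this] at h3; omega
      · have : a = i₀ := Fin.ext (by omega)
        rw [this] at hva
        rw [hva] at hwv
        omega
  obtain ⟨I, J, hI, hJ, hess, hrank⟩ := toEssential v ((n - i) + (n - j)) i j le_rfl hrothe
  have hessw := (hE I J).mp hess
  have hstep : rankMatrix w i j = rankMatrix v i j + 1 := by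
    unfold rankMatrix
    have hset : (univ.filter (fun a : Fin n => (a : ℕ) ≤ i ∧ (w a : ℕ) ≤ j)) =
        insert i₀ (univ.filter (fun a : Fin n => (a : ℕ) ≤ i ∧ (v a : ℕ) ≤ j)) := by
      ext a
      simp only [mem_filter, mem_univ, true_and, mem_insert]
      constructor
      · rintro ⟨h1, h2⟩
        by_cases ha : a = i₀
        · exact Or.inl ha
        · have h3 : (a : ℕ) < i := by
            rcases Nat.lt_or_ge (a : ℕ) i with h3 | h3
            · exact h3
            · exact absurd (Fin.ext (by omega : (a : ℕ) = (i₀ : ℕ))) ha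
          exact Or.inr ⟨by omega, by rw [heq_of_lt a h3]; exact h2⟩
      · rintro (ha | ⟨h1, h2⟩)
        · subst ha; exact ⟨le_rfl, le_rfl⟩
        · have ha : a ≠ i₀ := by
            rintro rfl
            omega
          have h3 : (a : ℕ) < i := by
            rcases Nat.lt_or_ge (a : ℕ) i with h3 | h3
            · exact h3
            · exact absurd (Fin.ext (by omega : (a : ℕ) = (i₀ : ℕ))) ha
          exact ⟨h1, by rw [← heq_of_lt a h3]; exact h2⟩
    rw [hset, Finset.card_insert_of_notMem]
    simp only [mem_filter, mem_univ, true_and, not_and]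
    intro _
    omega
  have hmono : rankMatrix w i j ≤ rankMatrix w I J := rank_mono w hI hJ
  have hval := hr I J hessw
  omega

/-- A permutation is uniquely determined by the values of its rank matrix on its essential
set: if `E(v) = E(w)` and the rank matrices of `v` and `w` agree on `E(w)`, then `v = w`. -/
theorem perm_eq_of_essential_and_rank {n : ℕ} (v w : Equiv.Perm (Fin n))
    (hE : ∀ i j : ℕ, InEssential v i j ↔ InEssential w i j)
    (hr : ∀ i j : ℕ, InEssential w i j → rankMatrix v i j = rankMatrix w i j) :
    v = w := by
  by_contra hne
  have hex : ∃ a : Fin n, v a ≠ w a := by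
    by_contra h
    push_neg at h
    exact hne (Equiv.ext h)
  set S := univ.filter (fun a : Fin n => v a ≠ w a) with hS
  have hSne : S.Nonempty := by
    obtain ⟨a, ha⟩ := hex
    exact ⟨a, by simp [hS, ha]⟩
  set i₀ := S.min' hSne with hi₀
  have hi₀mem : i₀ ∈ S := S.min'_mem hSne
  have hne₀ : v i₀ ≠ w i₀ := by
    simp only [hS, mem_filter] at hi₀mem
    exact hi₀mem.2
  have hlt : ∀ a : Fin n, a < i₀ → v a = w a := by
    intro a ha
    by_contra hcon
    have : a ∈ S := by simp [hS, hcon]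
    have := S.min'_le a this
    omega
  have hvalne : (v i₀ : ℕ) ≠ (w i₀ : ℕ) := fun h => hne₀ (Fin.ext h)
  rcases Nat.lt_or_ge (w i₀ : ℕ) (v i₀ : ℕ) with hcase | hcase
  · exact key v w hE hr i₀ hlt hcase
  · refine key w v (fun i j => (hE i j).symm)
      (fun i j h => (hr i j ((hE i j).mp h)).symm) i₀
      (fun a ha => (hlt a ha).symm) (by omega)
end
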